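/- There exists a flat EL disunification problem that has a (ground) solution but no local solution. Concretely, Γ = {X ⊑? B, A ⊓ B ⊓ C ⊑? X, ∃r.X ⊑? Y, ⊤ ⋢? Y, Y ⋢? ∃r.B} with variables X, Y and constants A, B, C is solved by σ(X) := A ⊓ B ⊓ C, σ(Y) := ∃r.(A ⊓ C), but no local substitution w.r.t. Γ solves Γ. -/

import Mathlib

inductive EL (N R : Type) : Type where
  | name : N → EL N R
  | top  : EL N R
  | conj : EL N R → EL N R → EL N R
  | ex   : R → EL N R → EL N R

structure Interp (N R : Type) where
  dom : Type
  nonempty : Nonempty dom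
  cname : N → Set dom
  role : R → Set (dom × dom)

def Interp.sem {N R : Type} (I : Interp N R) : EL N R → Set I.dom
  | .name A => I.cname A
  | .top => Set.univ
  | .conj C D => I.sem C ∩ I.sem D
  | .ex r C => {x | ∃ y, (x, y) ∈ I.role r ∧ y ∈ I.sem C}

/-- Semantic subsumption: `C ⊑ D` iff `C^I ⊆ D^I` for every interpretation `I`. -/
def Subsume {N R : Type} (C D : EL N R) : Prop :=
  ∀ I : Interp N R, I.sem C ⊆ I.sem D

/-- An atom is a concept name or an existential restriction. -/
def IsAtomEL {N R : Type} : EL N R → Prop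
  | .name _ => True
  | .ex _ _ => True
  | _ => False

/-- Top-level atoms of a concept term. -/
def tla {N R : Type} : EL N R → List (EL N R)
  | .conj C D => tla C ++ tla D
  | .top => []
  | .name A => [EL.name A]
  | .ex r C => [EL.ex r C]

/-- Conjunction of a nonempty list of terms `C :: Cs` (no extra ⊤ conjunct). -/
def conjs {N R : Type} : EL N R → List (EL N R) → EL N R
  | C, [] => C
  | C, D :: Ds => .conj C (conjs D Ds)

/-- Conjunction of a list of terms; the empty conjunction is ⊤. -/
def conjList {N R : Type} : List (EL N R) → EL N R
  | [] => .top
  | C :: Cs => conjs C Cs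

/-- Symbol count: each concept name (and ⊤) is one symbol, each `∃r.` is one symbol. -/
def sizeEL {N R : Type} : EL N R → ℕ
  | .name _ => 1
  | .top => 1
  | .conj C D => sizeEL C + sizeEL D + 1
  | .ex _ C => sizeEL C + 1

/-- Groundness: no occurrence of a variable (names are `V ⊕ K`, variables on the left). -/
def isGround {V K R : Type} : EL (V ⊕ K) R → Prop
  | .name (Sum.inl _) => False
  | .name (Sum.inr _) => True
  | .top => True
  | .conj C D => isGround C ∧ isGround D
  | .ex _ C => isGround C

/-- Application of a substitution `σ : V → EL (V ⊕ K) R` to a concept term. -/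
def applySub {V K R : Type} (σ : V → EL (V ⊕ K) R) : EL (V ⊕ K) R → EL (V ⊕ K) R
  | .name (Sum.inl X) => σ X
  | .name (Sum.inr A) => .name (Sum.inr A)
  | .top => .top
  | .conj C D => .conj (applySub σ C) (applySub σ D)
  | .ex r C => .ex r (applySub σ C)

/-- The variable `Y` occurs in the concept term. -/
def occursVar {V K R : Type} (Y : V) : EL (V ⊕ K) R → Prop
  | .name (Sum.inl X) => X = Y
  | .name (Sum.inr _) => False
  | .top => False
  | .conj C D => occursVar Y C ∨ occursVar Y D
  | .ex _ C => occursVar Y C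

inductive Vt : Type | vX | vY
deriving DecidableEq

inductive Kt : Type | kA | kB | kC
deriving DecidableEq

inductive Rt : Type | r
deriving DecidableEq

abbrev Tm : Type := EL (Vt ⊕ Kt) Rt

def cA : Tm := EL.name (Sum.inr Kt.kA)
def cB : Tm := EL.name (Sum.inr Kt.kB)
def cC : Tm := EL.name (Sum.inr Kt.kC)
def tX : Tm := EL.name (Sum.inl Vt.vX)

/-- The non-variable atoms of Γ: A, B, C, ∃r.X, ∃r.B. -/
def Atnv : List Tm := [cA, cB, cC, EL.ex Rt.r tX, EL.ex Rt.r cB]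

/-- σ solves Γ = {X ⊑? B, A⊓B⊓C ⊑? X, ∃r.X ⊑? Y, ⊤ ⋢? Y, Y ⋢? ∃r.B}
(σ maps variables to ground terms). -/
def SolvesGamma (σ : Vt → Tm) : Prop :=
  (∀ v, isGround (σ v)) ∧
  Subsume (σ Vt.vX) cB ∧
  Subsume (EL.conj cA (EL.conj cB cC)) (σ Vt.vX) ∧
  Subsume (EL.ex Rt.r (σ Vt.vX)) (σ Vt.vY) ∧
  ¬ Subsume EL.top (σ Vt.vY) ∧
  ¬ Subsume (σ Vt.vY) (EL.ex Rt.r cB)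

/-- σ is local w.r.t. Γ: induced by an acyclic assignment into the
non-variable atoms of Γ. -/
def LocalSub (σ : Vt → Tm) : Prop :=
  ∃ S : Vt → List Tm,
    (∀ v, ∀ D ∈ S v, D ∈ Atnv) ∧
    (∀ v, ¬ Relation.TransGen (fun a b : Vt => ∃ D ∈ S a, occursVar b D) v v) ∧
    (∀ v, σ v = conjList ((S v).map (applySub σ)))

def I1 : Interp (Vt ⊕ Kt) Rt where
  dom := Unit
  nonempty := ⟨()⟩
  cname := fun _ => ∅
  role := fun _ => ∅

def I2 : Interp (Vt ⊕ Kt) Rt where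
  dom := Unit
  nonempty := ⟨()⟩
  cname := fun n => if n = Sum.inr Kt.kB then ∅ else Set.univ
  role := fun _ => Set.univ

def I3 : Interp (Vt ⊕ Kt) Rt where
  dom := Bool
  nonempty := ⟨true⟩
  cname := fun _ => {true}
  role := fun _ => Set.univ

lemma I3_true (C : Tm) : true ∈ I3.sem C := by
  induction C with
  | name n => simp [Interp.sem, I3]; exact Set.mem_singleton _
  | top => trivial
  | conj C D ihC ihD => exact ⟨ihC, ihD⟩
  | ex r C ih => exact ⟨true, trivial, ih⟩

lemma mem_sem_conjs {N R : Type} (I : Interp N R) (C : EL N R) (L : List (EL N R))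
    (x : I.dom) :
    x ∈ I.sem (conjs C L) ↔ x ∈ I.sem C ∧ ∀ D ∈ L, x ∈ I.sem D := by
  induction L generalizing C with
  | nil => simp [conjs]
  | cons D Ds ih =>
    constructor
    · rintro ⟨h1, h2⟩
      rcases (ih D).1 h2 with ⟨h3, h4⟩
      refine ⟨h1, fun E hE => ?_⟩
      rcases List.mem_cons.1 hE with rfl | hE
      · exact h3
      · exact h4 E hE
    · rintro ⟨h1, h2⟩
      exact ⟨h1, (ih D).2 ⟨h2 D List.mem_cons_self,
        fun E hE => h2 E (List.mem_cons_of_mem _ hE)⟩⟩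

lemma conjList_sub {N R : Type} (L : List (EL N R)) (D : EL N R) (hD : D ∈ L) :
    Subsume (conjList L) D := by
  intro I x hx
  cases L with
  | nil => cases hD
  | cons C Cs =>
    rcases (mem_sem_conjs I C Cs x).1 hx with ⟨h1, h2⟩
    rcases List.mem_cons.1 hD with rfl | hD
    · exact h1
    · exact h2 D hD

lemma subsume_trans {N R : Type} {C D E : EL N R} (h1 : Subsume C D) (h2 : Subsume D E) :
    Subsume C E := fun I x hx => h2 I (h1 I hx)

lemma subsume_ex {N R : Type} {r : R} {C D : EL N R} (h : Subsume C D) :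
    Subsume (EL.ex r C) (EL.ex r D) := by
  rintro I x ⟨y, hy, hyC⟩
  exact ⟨y, hy, h I hyC⟩

theorem stmt18 :
    SolvesGamma (fun v => match v with
      | Vt.vX => EL.conj cA (EL.conj cB cC)
      | Vt.vY => EL.ex Rt.r (EL.conj cA cC)) ∧
    ∀ σ : Vt → Tm, LocalSub σ → ¬ SolvesGamma σ := by
  constructor
  · refine ⟨?_, ?_, ?_, ?_, ?_, ?_⟩
    · intro v; cases v
      · exact ⟨trivial, trivial, trivial⟩
      · exact ⟨trivial, trivial⟩
    · rintro I x ⟨hA, hB, hC⟩; exact hB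
    · intro I x hx; exact hx
    · rintro I x ⟨y, h1, h2, h3, h4⟩; exact ⟨y, h1, h2, h4⟩
    · intro h
      rcases h I1 (show (() : I1.dom) ∈ I1.sem EL.top from trivial) with ⟨y, hy, _⟩
      exact hy
    · intro h
      rcases h I2 (show (() : I2.dom) ∈ _ from ⟨(), trivial, by simp [Interp.sem, I2, cA]; exact trivial,
          by simp [Interp.sem, I2, cC]; exact trivial⟩) with ⟨y, hy, hB⟩
      simp [Interp.sem, I2, cB] at hB
      exact hB
  · rintro σ ⟨S, hS, hacyc, hσ⟩ ⟨hg, h1, h2, h3, h4, h5⟩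
    have hσY := hσ Vt.vY
    -- each conjunct of σ vY is subsumed by σ vY
    have hsub : ∀ D ∈ S Vt.vY, Subsume (σ Vt.vY) (applySub σ D) := by
      intro D hD
      rw [hσY]
      exact conjList_sub _ _ (List.mem_map_of_mem hD)
    -- no existential atom can be in S vY
    have hnex : ∀ D ∈ S Vt.vY, D = cA ∨ D = cB ∨ D = cC := by
      intro D hD
      have hmem := hS Vt.vY D hD
      simp only [Atnv, List.mem_cons, List.not_mem_nil, or_false] at hmem
      rcases hmem with h | h | h | h | h
      · exact Or.inl h
      · exact Or.inr (Or.inl h)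
      · exact Or.inr (Or.inr h)
      · exfalso
        have := hsub D hD
        rw [h] at this
        have hx : applySub σ (EL.ex Rt.r tX) = EL.ex Rt.r (σ Vt.vX) := rfl
        rw [hx] at this
        exact h5 (subsume_trans this (subsume_ex h1))
      · exfalso
        have := hsub D hD
        rw [h] at this
        have hx : applySub σ (EL.ex Rt.r cB) = EL.ex Rt.r cB := rfl
        rw [hx] at this
        exact h5 this
    -- case on S vY
    cases hL : S Vt.vY with
    | nil =>
      apply h4
      intro I x _
      rw [hσY, hL]
      trivial
    | cons D Ds =>
      rcases hnex D (by rw [hL]; exact List.mem_cons_self) with h | h | h <;>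
      · subst h
        have hsubD := hsub _ (by rw [hL]; exact List.mem_cons_self)
        have hfalse : (false : Bool) ∈ I3.sem (EL.ex Rt.r (σ Vt.vX)) :=
          ⟨true, trivial, I3_true _⟩
        have := hsubD I3 (h3 I3 hfalse)
        simp [applySub, cA, cB, cC, Interp.sem, I3] at this
        exact absurd (Set.mem_singleton_iff.1 this) Bool.false_ne_true
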